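/- Let n ≥ 1, p ≥ 1 and let M ∈ ℂ^{np×np} be a block matrix with blocks M_ij ∈ ℂ^{p×p} for i, j ∈ {1,…,n}, such that each diagonal block M_ii is Hermitian. Then for every eigenvalue λ ∈ ℂ of M there exists an index i such that Re(λ) ≥ λ_min(M_ii) − Σ_{j≠i} ‖M_ij‖, where λ_min(M_ii) denotes the smallest eigenvalue of the Hermitian matrix M_ii and ‖·‖ denotes the spectral (ℓ²-operator) norm. -/

import Mathlib

open scoped BigOperators

lemma block_gersh_key {p : ℕ} {A : Matrix (Fin p) (Fin p) ℂ} (hA : A.IsHermitian)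
    (x : EuclideanSpace ℂ (Fin p)) :
    (⨅ k, hA.eigenvalues k) * ‖x‖^2 ≤
      (inner ℂ x ((WithLp.equiv 2 _).symm (A.mulVec (WithLp.equiv 2 _ x))) : ℂ).re := by
  set b := hA.eigenvectorBasis with hb
  set T := Matrix.toEuclideanLin A with hT
  have hy : (WithLp.equiv 2 _).symm (A.mulVec (WithLp.equiv 2 _ x)) = T x := by
    rw [hT, Matrix.toEuclideanLin_apply]
    rfl
  rw [hy]
  have hsym : T.IsSymmetric := Matrix.isHermitian_iff_isSymmetric.mp hA
  have hTb : ∀ k, T (b k) = ((hA.eigenvalues k : ℂ)) • b k := by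
    intro k
    rw [hT, Matrix.toEuclideanLin_apply, hA.mulVec_eigenvectorBasis k]
    simp only [RCLike.real_smul_eq_coe_smul (K := ℂ), WithLp.toLp_smul]
    congr 1
  have h1 : (inner ℂ x (T x) : ℂ) = ∑ k, inner ℂ x (b k) * inner ℂ (b k) (T x) :=
    (b.sum_inner_mul_inner x (T x)).symm
  have h2 : ∀ k, (inner ℂ x (b k) * inner ℂ (b k) (T x) : ℂ)
      = (hA.eigenvalues k : ℂ) * ((‖(inner ℂ (b k) x : ℂ)‖^2 : ℝ) : ℂ) := by
    intro k
    rw [← hsym (b k) x, hTb k, inner_smul_left, Complex.conj_ofReal,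
      ← inner_conj_symm x (b k)]
    rw [show ((starRingEnd ℂ) (inner ℂ (b k) x) * ((hA.eigenvalues k : ℂ) * inner ℂ (b k) x))
        = (hA.eigenvalues k : ℂ) * ((inner ℂ (b k) x : ℂ) * (starRingEnd ℂ) (inner ℂ (b k) x))
      from by ring, Complex.mul_conj']
    norm_cast
  have hpar : ‖x‖^2 = ∑ k, ‖(inner ℂ (b k) x : ℂ)‖^2 := by
    have h3 := b.sum_inner_mul_inner x x
    have h4 : ∀ k, (inner ℂ x (b k) * inner ℂ (b k) x : ℂ)
        = ((‖(inner ℂ (b k) x : ℂ)‖^2 : ℝ) : ℂ) := by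
      intro k
      rw [← inner_conj_symm x (b k), mul_comm, Complex.mul_conj']
      norm_cast
    simp only [h4] at h3
    rw [inner_self_eq_norm_sq_to_K (𝕜 := ℂ) x] at h3
    norm_cast at h3
    exact (RCLike.ofReal_inj.mp h3).symm
  rw [h1, Complex.re_sum]
  calc (⨅ k, hA.eigenvalues k) * ‖x‖^2
      = ∑ k, (⨅ k, hA.eigenvalues k) * ‖(inner ℂ (b k) x : ℂ)‖^2 := by
        rw [hpar, Finset.mul_sum]
    _ ≤ ∑ k, (inner ℂ x (b k) * inner ℂ (b k) (T x) : ℂ).re := by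
        apply Finset.sum_le_sum
        intro k _
        rw [h2 k, ← Complex.ofReal_mul, Complex.ofReal_re]
        exact mul_le_mul_of_nonneg_right
          (ciInf_le (Set.Finite.bddBelow (Set.finite_range _)) k) (by positivity)

lemma block_gersh_neg_norm_le_re (z : ℂ) : -‖z‖ ≤ z.re := by
  have h1 := Complex.abs_re_le_norm z
  have h2 := neg_abs_le z.re
  linarith

/-- block Gershgorin theorem. For a block matrix `M` (blocks of size `p × p`)
with Hermitian diagonal blocks, every eigenvalue `λ` of `M` satisfies, for some block row `i`,
`Re λ ≥ λ_min(M i i) − Σ_{j ≠ i} ‖M i j‖`, where `‖·‖` is the spectral norm. -/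
theorem stmt_5 (n p : ℕ) (hn : 1 ≤ n) (hp : 1 ≤ p)
    (M : Fin n → Fin n → Matrix (Fin p) (Fin p) ℂ)
    (hherm : ∀ i, (M i i).IsHermitian)
    (lam : ℂ) (v : Fin n × Fin p → ℂ) (hv : v ≠ 0)
    (heig : (Matrix.of fun a b : Fin n × Fin p => M a.1 b.1 a.2 b.2).mulVec v = lam • v) :
    ∃ i, (⨅ k, (hherm i).eigenvalues k) -
        ∑ j ∈ Finset.univ.erase i, ‖Matrix.toEuclideanCLM (𝕜 := ℂ) (M i j)‖ ≤ lam.re := by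
  classical
  set w : Fin n → (Fin p → ℂ) := fun j => fun l => v (j, l) with hw
  set u : Fin n → EuclideanSpace ℂ (Fin p) := fun j => (WithLp.equiv 2 _).symm (w j) with hu
  obtain ⟨i, -, hmax⟩ := Finset.exists_max_image Finset.univ (fun j => ‖u j‖)
    ⟨⟨0, hn⟩, Finset.mem_univ _⟩
  refine ⟨i, ?_⟩
  have hmax' : ∀ j, ‖u j‖ ≤ ‖u i‖ := fun j => hmax j (Finset.mem_univ j)
  have hpos : 0 < ‖u i‖ := by
    by_contra h
    push_neg at h
    apply hv
    funext jl
    obtain ⟨j, l⟩ := jl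
    have huj : u j = 0 := norm_le_zero_iff.mp ((hmax' j).trans h)
    have := congrFun (congrArg (WithLp.equiv 2 (Fin p → ℂ)) huj) l
    simpa [hu, hw] using this
  have hCLM : ∀ j, Matrix.toEuclideanCLM (𝕜 := ℂ) (M i j) (u j)
      = (WithLp.equiv 2 (Fin p → ℂ)).symm ((M i j).mulVec (w j)) := fun j => by
    rfl
  have hsymm_sum : ∀ (g : Fin n → (Fin p → ℂ)),
      (WithLp.equiv 2 (Fin p → ℂ)).symm (∑ j, g j)
        = ∑ j, (WithLp.equiv 2 (Fin p → ℂ)).symm (g j) := by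
    intro g
    exact map_sum (WithLp.linearEquiv 2 ℂ (Fin p → ℂ)).symm g Finset.univ
  have hrow : (WithLp.equiv 2 (Fin p → ℂ)).symm
      (fun k => ((Matrix.of fun a b : Fin n × Fin p => M a.1 b.1 a.2 b.2).mulVec v) (i, k))
      = ∑ j, Matrix.toEuclideanCLM (𝕜 := ℂ) (M i j) (u j) := by
    simp only [hCLM]
    rw [← hsymm_sum]
    congr 1
    funext k
    simp only [Matrix.mulVec, dotProduct, Matrix.of_apply, Fintype.sum_prod_type,
      Finset.sum_apply, hw]
  have hlhs : (WithLp.equiv 2 (Fin p → ℂ)).symm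
      (fun k => ((Matrix.of fun a b : Fin n × Fin p => M a.1 b.1 a.2 b.2).mulVec v) (i, k))
      = lam • u i := by
    rw [heig]
    ext k
    simp [hu, hw]
  have hkey : lam * ((‖u i‖^2 : ℝ) : ℂ)
      = ∑ j, (inner ℂ (u i) (Matrix.toEuclideanCLM (𝕜 := ℂ) (M i j) (u j)) : ℂ) := by
    rw [← inner_sum, ← hrow, hlhs, inner_smul_right, inner_self_eq_norm_sq_to_K]
    norm_cast
  have hre : lam.re * ‖u i‖^2
      = ∑ j, (inner ℂ (u i) (Matrix.toEuclideanCLM (𝕜 := ℂ) (M i j) (u j)) : ℂ).re := by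
    have := congrArg Complex.re hkey
    rwa [Complex.re_sum, Complex.mul_re, Complex.ofReal_re, Complex.ofReal_im,
      mul_zero, sub_zero] at this
  have hdiag : (⨅ k, (hherm i).eigenvalues k) * ‖u i‖^2
      ≤ (inner ℂ (u i) (Matrix.toEuclideanCLM (𝕜 := ℂ) (M i i) (u i)) : ℂ).re := by
    have hk := block_gersh_key (hherm i) (u i)
    rw [hCLM i]
    have hwi : (WithLp.equiv 2 (Fin p → ℂ)) (u i) = w i := Equiv.apply_symm_apply _ _
    rwa [hwi] at hk
  have hoff : ∀ j, -(‖Matrix.toEuclideanCLM (𝕜 := ℂ) (M i j)‖ * ‖u i‖^2)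
      ≤ (inner ℂ (u i) (Matrix.toEuclideanCLM (𝕜 := ℂ) (M i j) (u j)) : ℂ).re := by
    intro j
    refine le_trans (neg_le_neg ?_) (block_gersh_neg_norm_le_re _)
    have h1 : ‖(inner ℂ (u i) (Matrix.toEuclideanCLM (𝕜 := ℂ) (M i j) (u j)) : ℂ)‖
        ≤ ‖u i‖ * (‖Matrix.toEuclideanCLM (𝕜 := ℂ) (M i j)‖ * ‖u j‖) :=
      (norm_inner_le_norm _ _).trans (by
        gcongr
        exact ContinuousLinearMap.le_opNorm _ _)
    have h2 : ‖u i‖ * (‖Matrix.toEuclideanCLM (𝕜 := ℂ) (M i j)‖ * ‖u j‖)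
        ≤ ‖Matrix.toEuclideanCLM (𝕜 := ℂ) (M i j)‖ * ‖u i‖^2 := by
      have h3 := hmax' j
      calc ‖u i‖ * (‖Matrix.toEuclideanCLM (𝕜 := ℂ) (M i j)‖ * ‖u j‖)
          ≤ ‖u i‖ * (‖Matrix.toEuclideanCLM (𝕜 := ℂ) (M i j)‖ * ‖u i‖) := by gcongr
        _ = ‖Matrix.toEuclideanCLM (𝕜 := ℂ) (M i j)‖ * ‖u i‖^2 := by ring
    linarith
  have hstep : ((⨅ k, (hherm i).eigenvalues k) -
      ∑ j ∈ Finset.univ.erase i, ‖Matrix.toEuclideanCLM (𝕜 := ℂ) (M i j)‖) * ‖u i‖^2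
      ≤ lam.re * ‖u i‖^2 := by
    rw [hre, ← Finset.add_sum_erase Finset.univ _ (Finset.mem_univ i), sub_mul, Finset.sum_mul]
    have hsum : -∑ j ∈ Finset.univ.erase i, ‖Matrix.toEuclideanCLM (𝕜 := ℂ) (M i j)‖ * ‖u i‖^2
        ≤ ∑ j ∈ Finset.univ.erase i,
            (inner ℂ (u i) (Matrix.toEuclideanCLM (𝕜 := ℂ) (M i j) (u j)) : ℂ).re := by
      rw [← Finset.sum_neg_distrib]
      exact Finset.sum_le_sum fun j _ => hoff j
    linarith [hdiag, hsum]
  exact (mul_le_mul_iff_of_pos_right (pow_pos hpos 2)).mp hstep
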